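/- Existence of principal blocks almost everywhere: let (W_n) be a construction sequence over a finite alphabet with associated symbolic system 𝕂, and let ν be a shift-invariant Borel probability measure on 𝕂 with ν(S) = 1. Then for ν-almost every s there is N such that for all n > N there exist integers a_n ≤ 0 < b_n with s↾[a_n, b_n) ∈ W_n. -/

import Mathlib

/-!
STATEMENT 13: Existence of principal blocks almost everywhere.
-/

namespace Stmt13

open MeasureTheory
open scoped ENNReal NNReal

/-- The shift on `A^ℤ`. -/
def sh {A : Type*} (x : ℤ → A) : ℤ → A := fun n => x (n + 1)

/-- The finite contiguous subword of `x` on `[a, a + len)`. -/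
def subword {A : Type*} (x : ℤ → A) (a : ℤ) (len : ℕ) : List A :=
  (List.range len).map fun t => x (a + t)

/-- Unique readability. -/
def UniquelyReadable {A : Type*} (W : Set (List A)) : Prop :=
  ∀ u ∈ W, ∀ v ∈ W, ∀ w ∈ W, ∀ α β : List A, u ++ v = α ++ w ++ β → α = [] ∨ β = []

/-- Alternating concatenation `u_0 w_0 u_1 w_1 ⋯ w_J u_{J+1}`
(`joinAlt [u_0,…,u_{J+1}] [w_0,…,w_J]`). -/
def joinAlt {A : Type*} : List (List A) → List (List A) → List A
  | [], _ => []
  | u :: _, [] => u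
  | u :: us, v :: ws => u ++ v ++ joinAlt us ws

/-- The symbolic system `𝕂` associated with `W`. -/
def Kset {A : Type*} (W : ℕ → Set (List A)) : Set (ℤ → A) :=
  {x | ∀ (a : ℤ) (len : ℕ), ∃ n, ∃ w ∈ W n, subword x a len <:+: w}

/-- The set `S ⊆ 𝕂` of doubly-parsed points. -/
def Sset {A : Type*} (W : ℕ → Set (List A)) : Set (ℤ → A) :=
  {x | x ∈ Kset W ∧ ∃ a b : ℕ → ℕ,
    Filter.Tendsto a Filter.atTop Filter.atTop ∧
    Filter.Tendsto b Filter.atTop Filter.atTop ∧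
    ∀ m, ∃ n, subword x (-(a m : ℤ)) (a m + b m) ∈ W n}

attribute [local instance] Classical.propDecidable

section Aux

variable {A : Type*}

lemma subword_eq (x : ℤ → A) (a : ℤ) (len : ℕ) :
    subword x a len = (List.range len).map (fun t : ℕ => x (a + (t : ℤ))) := by
  rw [subword]
  induction len with
  | zero => rfl
  | succ n ih => rw [List.range_succ]; simp_all

lemma subword_length (x : ℤ → A) (a : ℤ) (len : ℕ) : (subword x a len).length = len := by
  rw [subword_eq, List.length_map, List.length_range]

lemma subword_append (x : ℤ → A) (a : ℤ) (l₁ l₂ : ℕ) :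
    subword x a (l₁ + l₂) = subword x a l₁ ++ subword x (a + l₁) l₂ := by
  rw [subword_eq, subword_eq, subword_eq, List.range_add, List.map_append, List.map_map]
  congr 1
  apply List.map_congr_left
  intro t _
  simp only [Function.comp_apply]
  congr 1
  push_cast
  ring

lemma sh_iterate (x : ℤ → A) (k : ℕ) (t : ℤ) : (sh^[k] x) t = x (t + k) := by
  induction k generalizing x t with
  | zero => simp
  | succ k ih =>
    rw [Function.iterate_succ_apply, ih]
    simp only [sh]
    congr 1
    push_cast
    ring

lemma subword_iterate (x : ℤ → A) (k : ℕ) (a : ℤ) (len : ℕ) :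
    subword (sh^[k] x) a len = subword x (a + k) len := by
  rw [subword_eq, subword_eq]
  apply List.map_congr_left
  intro t _
  rw [sh_iterate]
  congr 1
  ring

lemma subword_extract (x : ℤ → A) (s : ℤ) (q : ℕ) (α v γ : List A)
    (hq : q = α.length + v.length + γ.length)
    (h : subword x s q = α ++ v ++ γ) :
    subword x (s + α.length) v.length = v := by
  subst hq
  rw [show α.length + v.length + γ.length = α.length + (v.length + γ.length) from by ring,
    subword_append, subword_append, List.append_assoc] at h
  have h1 := List.append_inj h (subword_length x s α.length)
  have h2 := List.append_inj h1.2 (subword_length x (s + α.length) v.length)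
  exact h2.1

/-- Position `t` of the word `w` is covered by an occurrence of a word of `V`. -/
def Covered (V : Set (List A)) (w : List A) (t : ℕ) : Prop :=
  ∃ α v γ, v ∈ V ∧ w = α ++ v ++ γ ∧ α.length ≤ t ∧ t < α.length + v.length

lemma uncovered_card (V : Set (List A)) :
    ∀ (ws us : List (List A)), us.length = ws.length + 1 → (∀ v ∈ ws, v ∈ V) →
      (((Finset.range (joinAlt us ws).length).filter
        fun t => ¬ Covered V (joinAlt us ws) t).card) ≤ (us.map List.length).sum := by
  intro ws
  induction ws with
  | nil =>
    intro us hus _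
    match us, hus with
    | [u], _ =>
      simp only [joinAlt, List.map_cons, List.map_nil, List.sum_cons, List.sum_nil, add_zero]
      calc ((Finset.range u.length).filter _).card ≤ (Finset.range u.length).card :=
            Finset.card_filter_le _ _
        _ = u.length := Finset.card_range _
  | cons v ws' ih =>
    intro us hus hV
    match us with
    | u :: us' =>
      have hus' : us'.length = ws'.length + 1 := by simpa using hus
      have hV' : ∀ v' ∈ ws', v' ∈ V := fun v' hv' => hV v' (List.mem_cons_of_mem _ hv')
      set w' := joinAlt us' ws' with hw'
      have hj : joinAlt (u :: us') (v :: ws') = u ++ v ++ w' := rfl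
      rw [hj]
      have hsub : ((Finset.range (u ++ v ++ w').length).filter
          fun t => ¬ Covered V (u ++ v ++ w') t) ⊆
          (Finset.range u.length) ∪
            ((Finset.range w'.length).filter fun t => ¬ Covered V w' t).image
              (fun t => t + (u.length + v.length)) := by
        intro t ht
        simp only [Finset.mem_filter, Finset.mem_range] at ht
        obtain ⟨htlen, hnc⟩ := ht
        rcases lt_or_ge t u.length with h1 | h1
        · exact Finset.mem_union_left _ (Finset.mem_range.mpr h1)
        rcases lt_or_ge t (u.length + v.length) with h2 | h2
        · exfalso
          exact hnc ⟨u, v, w', hV v (List.mem_cons_self), by simp, h1, h2⟩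
        · apply Finset.mem_union_right
          rw [Finset.mem_image]
          refine ⟨t - (u.length + v.length), ?_, by omega⟩
          simp only [Finset.mem_filter, Finset.mem_range]
          constructor
          · have hh : (u ++ v ++ w').length = u.length + v.length + w'.length := by
              simp [List.length_append]; omega
            omega
          · intro hc
            obtain ⟨α, vv, γ, hvv, heq, hle, hlt⟩ := hc
            apply hnc
            refine ⟨u ++ v ++ α, vv, γ, hvv, ?_, ?_, ?_⟩
            · rw [heq]; simp [List.append_assoc]
            · simp only [List.length_append]; omega
            · simp only [List.length_append]; omega
      calc ((Finset.range (u ++ v ++ w').length).filter _).card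
          ≤ _ := Finset.card_le_card hsub
        _ ≤ (Finset.range u.length).card +
            (((Finset.range w'.length).filter fun t => ¬ Covered V w' t).image
              (fun t => t + (u.length + v.length))).card := Finset.card_union_le _ _
        _ ≤ u.length + ((Finset.range w'.length).filter fun t => ¬ Covered V w' t).card := by
            rw [Finset.card_range]
            exact Nat.add_le_add_left (Finset.card_image_le) _
        _ ≤ u.length + (us'.map List.length).sum := Nat.add_le_add_left (ih us' hus' hV') _
        _ = ((u :: us').map List.length).sum := by simp

lemma subword_eq_ofFn (x : ℤ → A) (a : ℤ) (len : ℕ) :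
    subword x a len = List.ofFn (fun t : Fin len => x (a + ((t : ℕ) : ℤ))) := by
  rw [subword_eq]
  apply List.ext_getElem
  · simp
  · intro i h1 h2
    simp

lemma measurableSet_subword_mem [Fintype A] [MeasurableSpace A] [MeasurableSingletonClass A]
    (a : ℤ) (len : ℕ) (V : Set (List A)) :
    MeasurableSet {x : ℤ → A | subword x a len ∈ V} := by
  have heq : {x : ℤ → A | subword x a len ∈ V} =
      (fun (x : ℤ → A) (t : Fin len) => x (a + ((t : ℕ) : ℤ))) ⁻¹'
        {v : Fin len → A | List.ofFn v ∈ V} := by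
    ext x
    simp [subword_eq_ofFn]
  rw [heq]
  exact (measurable_pi_lambda _ (fun t => measurable_pi_apply _))
    ((Set.toFinite _).measurableSet)

/-- Combinatorial covering lemma: if every bad point lies in some interval of length `q`
containing fewer than `C` bad points, then any interval of length `q` contains at most
`2C` bad points. -/
lemma lemD (Bd : Finset ℤ) (q : ℕ) (C : ℝ) (hC : 0 < C) (a : ℤ)
    (hrange : ∀ k ∈ Bd, a ≤ k ∧ k < a + q)
    (hcov : ∀ p ∈ Bd, ∃ s : ℤ, s ≤ p ∧ p < s + q ∧
      (((Bd.filter (fun k => s ≤ k ∧ k < s + q)).card : ℝ) < C)) :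
    (Bd.card : ℝ) ≤ 2 * C := by
  by_contra hcon
  push_neg at hcon
  have hne : Bd.Nonempty := by
    rcases Finset.eq_empty_or_nonempty Bd with h | h
    · exfalso; rw [h] at hcon; simp at hcon; linarith
    · exact h
  set T := Bd.filter (fun p => C ≤ ((Bd.filter (fun k => k ≤ p)).card : ℝ)) with hT
  have hTne : T.Nonempty := by
    refine ⟨Bd.max' hne, ?_⟩
    rw [hT, Finset.mem_filter]
    refine ⟨Bd.max'_mem hne, ?_⟩
    have heq2 : Bd.filter (fun k => k ≤ Bd.max' hne) = Bd :=
      Finset.filter_true_of_mem (fun k hk => Bd.le_max' k hk)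
    rw [heq2]
    linarith
  set p := T.min' hTne with hp
  have hpT : p ∈ T := T.min'_mem hTne
  have hpBd : p ∈ Bd := (Finset.mem_filter.mp hpT).1
  have hleft : C ≤ ((Bd.filter (fun k => k ≤ p)).card : ℝ) := (Finset.mem_filter.mp hpT).2
  have hleft' : ((Bd.filter (fun k => k < p)).card : ℝ) < C := by
    by_contra h
    push_neg at h
    have hpos : 0 < (Bd.filter (fun k => k < p)).card := by
      by_contra h0
      push_neg at h0
      interval_cases h2 : (Bd.filter (fun k => k < p)).card
      all_goals simp_all; linarith
    have hne2 : (Bd.filter (fun k => k < p)).Nonempty := Finset.card_pos.mp hpos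
    set p' := (Bd.filter (fun k => k < p)).max' hne2 with hp'
    have hp'mem := (Bd.filter (fun k => k < p)).max'_mem hne2
    rw [Finset.mem_filter] at hp'mem
    have hsubs : Bd.filter (fun k => k < p) ⊆ Bd.filter (fun k => k ≤ p') := by
      intro k hk
      rw [Finset.mem_filter] at hk ⊢
      exact ⟨hk.1, Finset.le_max' _ k (Finset.mem_filter.mpr hk)⟩
    have hC' : C ≤ ((Bd.filter (fun k => k ≤ p')).card : ℝ) :=
      le_trans h (by exact_mod_cast Finset.card_le_card hsubs)
    have hp'T : p' ∈ T := by
      rw [hT, Finset.mem_filter]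
      exact ⟨hp'mem.1, hC'⟩
    have := T.min'_le p' hp'T
    rw [← hp] at this
    omega
  have hsplit : (Bd.filter (fun k => k < p)).card + (Bd.filter (fun k => p ≤ k)).card
      = Bd.card := by
    have := Finset.card_filter_add_card_filter_not
      (s := Bd) (p := fun k => k < p)
    rw [← this]
    congr 2
    ext k
    simp [not_lt]
  have hright : C < ((Bd.filter (fun k => p ≤ k)).card : ℝ) := by
    have h1 : ((Bd.filter (fun k => k < p)).card : ℝ)
        + ((Bd.filter (fun k => p ≤ k)).card : ℝ) = (Bd.card : ℝ) := by
      exact_mod_cast hsplit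
    linarith
  obtain ⟨s, hs1, hs2, hs3⟩ := hcov p hpBd
  rcases le_or_gt s a with hsa | has
  · have hsubs : Bd.filter (fun k => k ≤ p) ⊆ Bd.filter (fun k => s ≤ k ∧ k < s + q) := by
      intro k hk
      rw [Finset.mem_filter] at hk ⊢
      exact ⟨hk.1, le_trans hsa (hrange k hk.1).1, lt_of_le_of_lt hk.2 hs2⟩
    have hcc : ((Bd.filter (fun k => k ≤ p)).card : ℝ)
        ≤ ((Bd.filter (fun k => s ≤ k ∧ k < s + q)).card : ℝ) := by
      exact_mod_cast Finset.card_le_card hsubs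
    linarith
  · have hsubs : Bd.filter (fun k => p ≤ k) ⊆ Bd.filter (fun k => s ≤ k ∧ k < s + q) := by
      intro k hk
      rw [Finset.mem_filter] at hk ⊢
      refine ⟨hk.1, le_trans hs1 hk.2, ?_⟩
      have := (hrange k hk.1).2
      omega
    have hcc : ((Bd.filter (fun k => p ≤ k)).card : ℝ)
        ≤ ((Bd.filter (fun k => s ≤ k ∧ k < s + q)).card : ℝ) := by
      exact_mod_cast Finset.card_le_card hsubs
    linarith

end Aux

/-- Existence of principal blocks a.e. -/
theorem principal_blocks_exist_ae
    {A : Type*} [Fintype A] [MeasurableSpace A] [MeasurableSingletonClass A]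
    (W : ℕ → Set (List A)) (qseq : ℕ → ℕ)
    (hlen : ∀ n, ∀ w ∈ W n, w.length = qseq n)
    (hsub : ∀ n, ∀ w ∈ W n, ∀ w' ∈ W (n + 1), w <:+: w')
    (hUR : ∀ n, UniquelyReadable (W n))
    (ε : ℕ → ℝ) (hε : ∀ n, 0 < ε n) (hεsum : Summable ε)
    (hparse : ∀ n, ∀ w ∈ W (n + 1), ∃ us ws : List (List A),
      us.length = ws.length + 1 ∧ (∀ v ∈ ws, v ∈ W n) ∧ w = joinAlt us ws ∧
      ((us.map List.length).sum : ℝ) < ε (n + 1) * qseq (n + 1))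
    (ν : Measure (ℤ → A)) [IsProbabilityMeasure ν]
    (hinv : Measure.map (sh (A := A)) ν = ν)
    (hS : ν (Sset W) = 1) :
    ∀ᵐ s ∂ν, ∃ N : ℕ, ∀ n, N < n →
      ∃ r : ℕ, r < qseq n ∧ subword s (-(r : ℤ)) (qseq n) ∈ W n := by
  classical
  -- principal-block sets
  set P : ℕ → Set (ℤ → A) :=
    fun n => {x | ∃ r : ℕ, r < qseq n ∧ subword x (-(r : ℤ)) (qseq n) ∈ W n} with hPdef
  have hPmeas : ∀ n, MeasurableSet (P n) := by
    intro n
    have : P n = ⋃ (r : ℕ), ⋃ (_ : r < qseq n),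
        {x : ℤ → A | subword x (-(r : ℤ)) (qseq n) ∈ W n} := by
      ext x
      simp [hPdef]
    rw [this]
    exact MeasurableSet.iUnion fun r => MeasurableSet.iUnion fun _ =>
      measurableSet_subword_mem _ _ _
  set B : ℕ → Set (ℤ → A) := fun n => P (n + 1) ∩ (P n)ᶜ with hBdef
  have hBmeas : ∀ n, MeasurableSet (B n) := fun n =>
    (hPmeas (n + 1)).inter (hPmeas n).compl
  -- shift measurability and invariance
  have hshmeas : Measurable (sh (A := A)) :=
    measurable_pi_lambda _ (fun t => measurable_pi_apply _)
  have hitermeas : ∀ k : ℕ, Measurable ((sh (A := A))^[k]) := fun k => hshmeas.iterate k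
  have hmap : ∀ k : ℕ, Measure.map ((sh (A := A))^[k]) ν = ν := by
    intro k
    induction k with
    | zero => simp
    | succ k ih =>
      rw [Function.iterate_succ', ← Measure.map_map hshmeas (hitermeas k), ih, hinv]
  -- membership of shifted points in P
  have hPshift : ∀ (m k : ℕ) (x : ℤ → A), (sh^[k] x ∈ P m) ↔
      (∃ r : ℕ, r < qseq m ∧ subword x ((k : ℤ) - r) (qseq m) ∈ W m) := by
    intro m k x
    constructor
    · rintro ⟨r, hr, hsub'⟩
      refine ⟨r, hr, ?_⟩
      rw [subword_iterate] at hsub'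
      rwa [show (k : ℤ) - r = -(r : ℤ) + k from by ring]
    · rintro ⟨r, hr, hsub'⟩
      refine ⟨r, hr, ?_⟩
      rw [subword_iterate, show -(r : ℤ) + k = (k : ℤ) - r from by ring]
      exact hsub'
  -- the "bad at position k" predicate
  set BadAt : (ℤ → A) → ℕ → ℤ → Prop := fun x n k =>
    (∃ r : ℕ, r < qseq (n + 1) ∧ subword x (k - r) (qseq (n + 1)) ∈ W (n + 1)) ∧
    ¬(∃ r : ℕ, r < qseq n ∧ subword x (k - r) (qseq n) ∈ W n) with hBadAtdef
  have hBshift : ∀ (n k : ℕ) (x : ℤ → A), (sh^[k] x ∈ B n) ↔ BadAt x n (k : ℤ) := by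
    intro n k x
    rw [hBadAtdef]
    simp only [hBdef, Set.mem_inter_iff, Set.mem_compl_iff]
    rw [hPshift (n + 1) k x, hPshift n k x]
  -- the combinatorial cardinality bound
  have hcard : ∀ (n : ℕ), 0 < qseq (n + 1) → ∀ x : ℤ → A,
      (((Finset.Ico (0 : ℤ) (qseq (n + 1))).filter (fun k => BadAt x n k)).card : ℝ)
        ≤ 2 * (ε (n + 1) * qseq (n + 1)) := by
    intro n hq x
    set Q := qseq (n + 1) with hQ
    apply lemD _ Q _ (mul_pos (hε (n+1)) (by exact_mod_cast hq)) 0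
    · intro k hk
      rw [Finset.mem_filter, Finset.mem_Ico] at hk
      exact ⟨hk.1.1, by simpa using hk.1.2⟩
    · intro p hpmem
      rw [Finset.mem_filter, Finset.mem_Ico] at hpmem
      obtain ⟨⟨hp0, hpQ⟩, hbad⟩ := hpmem
      obtain ⟨⟨r, hr, hw⟩, -⟩ := hbad
      refine ⟨p - r, by omega, by omega, ?_⟩
      set s : ℤ := p - r with hs
      set w : List A := subword x s Q with hwdef
      have hwW : w ∈ W (n + 1) := hw
      have hwlen : w.length = Q := subword_length x s Q
      obtain ⟨us, ws, hus, hws, hjoin, hspace⟩ := hparse n w hwW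
      have huncov := uncovered_card (W n) ws us hus hws
      rw [← hjoin] at huncov
      have hinj : (((Finset.Ico (0 : ℤ) (Q : ℤ)).filter (fun k => BadAt x n k)).filter
            (fun k => s ≤ k ∧ k < s + Q)).card ≤
          ((Finset.range w.length).filter fun t => ¬ Covered (W n) w t).card := by
        apply Finset.card_le_card_of_injOn (fun k => (k - s).toNat)
        · intro k hk
          rw [Finset.mem_coe, Finset.mem_filter, Finset.mem_filter, Finset.mem_Ico] at hk
          obtain ⟨⟨⟨hk0, hkQ⟩, hbadk⟩, hks1, hks2⟩ := hk
          have htnn : (0 : ℤ) ≤ k - s := by omega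
          have ht : ((k - s).toNat : ℤ) = k - s := Int.toNat_of_nonneg htnn
          simp only [Finset.mem_coe, Finset.mem_filter, Finset.mem_range]
          constructor
          · rw [hwlen]; omega
          · intro hc
            obtain ⟨α, v, γ, hv, heq, hle, hlt⟩ := hc
            have hvlen : v.length = qseq n := hlen n v hv
            have hqdec : Q = α.length + v.length + γ.length := by
              rw [← hwlen, heq]
              simp [List.length_append]; omega
            have hext : subword x (s + α.length) v.length = v :=
              subword_extract x s Q α v γ hqdec (by rw [← hwdef, heq])
            rcases hbadk with ⟨-, hnb⟩
            apply hnb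
            refine ⟨(k - s).toNat - α.length, by omega, ?_⟩
            have hcast : (((k - s).toNat - α.length : ℕ) : ℤ)
                = ((k - s).toNat : ℤ) - α.length := by
              rw [Nat.cast_sub hle]
            have harith : k - (((k - s).toNat - α.length : ℕ) : ℤ) = s + α.length := by
              rw [hcast]; omega
            rw [harith, ← hvlen, hext]
            exact hv
        · intro k hk k' hk' hkk
          simp only [Finset.coe_filter, Set.mem_setOf_eq] at hk hk'
          obtain ⟨-, hks, -⟩ := hk
          obtain ⟨-, hk's, -⟩ := hk'
          have hkk' : (k - s).toNat = (k' - s).toNat := hkk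
          omega
      calc ((((Finset.Ico (0 : ℤ) (Q : ℤ)).filter (fun k => BadAt x n k)).filter
            (fun k => s ≤ k ∧ k < s + Q)).card : ℝ)
          ≤ (((Finset.range w.length).filter fun t => ¬ Covered (W n) w t).card : ℝ) := by
            exact_mod_cast hinj
        _ ≤ ((us.map List.length).sum : ℝ) := by exact_mod_cast huncov
        _ < ε (n + 1) * Q := hspace
  -- measure bound
  have hkey : ∀ n : ℕ, ν (B n) ≤ ENNReal.ofReal (2 * ε (n + 1)) := by
    intro n
    rcases Nat.eq_zero_or_pos (qseq (n + 1)) with hq0 | hqpos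
    · have hBempty : B n = ∅ := by
        ext x
        simp only [hBdef, Set.mem_inter_iff, Set.mem_empty_iff_false, iff_false]
        rintro ⟨⟨r, hr, -⟩, -⟩
        omega
      rw [hBempty]
      simp
    · set Q := qseq (n + 1) with hQ
      set pre : ℕ → Set (ℤ → A) := fun k => (sh^[k]) ⁻¹' (B n) with hpre
      have hpremeas : ∀ k, MeasurableSet (pre k) := fun k => hitermeas k (hBmeas n)
      have hνpre : ∀ k : ℕ, ν (pre k) = ν (B n) := by
        intro k
        rw [hpre]
        rw [← Measure.map_apply (hitermeas k) (hBmeas n), hmap k]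
      have hsum1 : (Q : ℝ≥0∞) * ν (B n) = ∑ k ∈ Finset.range Q, ν (pre k) := by
        rw [Finset.sum_congr rfl (fun k _ => hνpre k), Finset.sum_const, Finset.card_range,
          nsmul_eq_mul]
      have hsum2 : ∑ k ∈ Finset.range Q, ν (pre k)
          = ∫⁻ x, ∑ k ∈ Finset.range Q, (pre k).indicator (fun _ => (1 : ℝ≥0∞)) x ∂ν := by
        rw [lintegral_finset_sum _ (fun k _ => measurable_const.indicator (hpremeas k))]
        exact Finset.sum_congr rfl fun k _ => (lintegral_indicator_one (hpremeas k)).symm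
      have hptwise : ∀ x : ℤ → A,
          ∑ k ∈ Finset.range Q, (pre k).indicator (fun _ => (1 : ℝ≥0∞)) x
            ≤ ENNReal.ofReal (2 * (ε (n + 1) * Q)) := by
        intro x
        have h1 : ∑ k ∈ Finset.range Q, (pre k).indicator (fun _ => (1 : ℝ≥0∞)) x
            = (((Finset.range Q).filter (fun k => x ∈ pre k)).card : ℝ≥0∞) := by
          rw [← Finset.sum_boole]
          exact Finset.sum_congr rfl fun k _ => by
            rw [Set.indicator_apply]
        rw [h1]
        have h2 : ((Finset.range Q).filter (fun k => x ∈ pre k)).card ≤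
            ((Finset.Ico (0 : ℤ) (Q : ℤ)).filter (fun k => BadAt x n k)).card := by
          refine Finset.card_le_card_of_injOn (fun k : ℕ => (k : ℤ)) ?_ ?_
          · intro k hk
            rw [Finset.mem_coe, Finset.mem_filter, Finset.mem_range] at hk
            simp only [Finset.mem_coe, Finset.mem_filter, Finset.mem_Ico]
            refine ⟨⟨Int.natCast_nonneg k, by show (k:ℤ) < (Q:ℤ); exact_mod_cast hk.1⟩, ?_⟩
            rw [← hBshift n k x]
            exact hk.2
          · intro k _ k' _ h
            have h' : (k : ℤ) = (k' : ℤ) := h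
            exact_mod_cast h'
        have h3 : (((Finset.Ico (0 : ℤ) (Q : ℤ)).filter (fun k => BadAt x n k)).card : ℝ)
            ≤ 2 * (ε (n + 1) * Q) := hcard n hqpos x
        calc (((Finset.range Q).filter (fun k => x ∈ pre k)).card : ℝ≥0∞)
            ≤ ((((Finset.Ico (0 : ℤ) (Q : ℤ)).filter (fun k => BadAt x n k)).card : ℕ) : ℝ≥0∞) := by
              exact_mod_cast h2
          _ = ENNReal.ofReal ((((Finset.Ico (0 : ℤ) (Q : ℤ)).filter
                (fun k => BadAt x n k)).card : ℕ) : ℝ) := by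
              rw [ENNReal.ofReal_natCast]
          _ ≤ ENNReal.ofReal (2 * (ε (n + 1) * Q)) := ENNReal.ofReal_le_ofReal h3
      have hint : ∫⁻ x, ∑ k ∈ Finset.range Q, (pre k).indicator (fun _ => (1 : ℝ≥0∞)) x ∂ν
          ≤ ENNReal.ofReal (2 * (ε (n + 1) * Q)) := by
        calc ∫⁻ x, ∑ k ∈ Finset.range Q, (pre k).indicator (fun _ => (1 : ℝ≥0∞)) x ∂ν
            ≤ ∫⁻ _, ENNReal.ofReal (2 * (ε (n + 1) * Q)) ∂ν := lintegral_mono hptwise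
          _ = ENNReal.ofReal (2 * (ε (n + 1) * Q)) := by
              rw [lintegral_const, measure_univ, mul_one]
      have hmain : (Q : ℝ≥0∞) * ν (B n) ≤ ENNReal.ofReal (2 * ε (n + 1)) * (Q : ℝ≥0∞) := by
        rw [hsum1, hsum2]
        refine le_trans hint (le_of_eq ?_)
        rw [show 2 * (ε (n + 1) * (Q : ℝ)) = (2 * ε (n + 1)) * (Q : ℝ) from by ring,
          ENNReal.ofReal_mul (by linarith [hε (n + 1)]), ENNReal.ofReal_natCast]
      rw [mul_comm] at hmain
      exact (ENNReal.mul_le_mul_iff_left (by exact_mod_cast hqpos.ne') (by simp)).mp hmain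
  -- Borel–Cantelli
  have hsummable : Summable (fun n => 2 * ε (n + 1)) :=
    ((summable_nat_add_iff 1).mpr hεsum).mul_left 2
  have htsum : (∑' n, ν (B n)) ≠ ⊤ := by
    have h1 : (∑' n, ν (B n)) ≤ ∑' n, ENNReal.ofReal (2 * ε (n + 1)) :=
      ENNReal.tsum_le_tsum hkey
    have h2 : (∑' n, ENNReal.ofReal (2 * ε (n + 1)))
        = ENNReal.ofReal (∑' n, 2 * ε (n + 1)) :=
      (ENNReal.ofReal_tsum_of_nonneg (fun n => by linarith [hε (n + 1)]) hsummable).symm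
    rw [h2] at h1
    exact ne_top_of_le_ne_top ENNReal.ofReal_ne_top h1
  have hBC : ν {x | ∃ᶠ n in Filter.atTop, x ∈ B n} = 0 :=
    measure_setOf_frequently_eq_zero (by simpa using htsum)
  -- pointwise: points of S have principal blocks at arbitrarily large levels
  have hA : ∀ x ∈ Sset W, ∀ N : ℕ, ∃ n, N < n ∧ x ∈ P n := by
    rintro x ⟨-, a, b, ha, hb, hw⟩ N
    set Q := (Finset.range (N + 1)).sup qseq with hQs
    have h1 : ∀ᶠ m in Filter.atTop, Q + 1 ≤ a m := ha.eventually_ge_atTop _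
    have h2 : ∀ᶠ m in Filter.atTop, 1 ≤ b m := hb.eventually_ge_atTop _
    obtain ⟨m, hm1, hm2⟩ := (h1.and h2).exists
    obtain ⟨n, hn⟩ := hw m
    have hlenw : qseq n = a m + b m := by
      rw [← hlen n _ hn, subword_length]
    have hnN : N < n := by
      by_contra h
      push_neg at h
      have : qseq n ≤ Q := Finset.le_sup (Finset.mem_range.mpr (by omega))
      omega
    refine ⟨n, hnN, ⟨a m, by omega, ?_⟩⟩
    rw [hlenw]
    exact hn
  -- assembling
  set G : Set (ℤ → A) := {x | ∃ N : ℕ, ∀ n, N < n → x ∈ P n} with hGdef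
  have hGmeas : MeasurableSet G := by
    have : G = ⋃ (N : ℕ), ⋂ (n : ℕ), ⋂ (_ : N < n), P n := by
      ext x
      simp [hGdef]
    rw [this]
    exact MeasurableSet.iUnion fun N => MeasurableSet.iInter fun n =>
      MeasurableSet.iInter fun _ => hPmeas n
  have hSG : ∀ x, x ∈ Sset W → (∀ᶠ n in Filter.atTop, x ∉ B n) → x ∈ G := by
    intro x hx hev
    obtain ⟨N₀, hN₀⟩ := Filter.eventually_atTop.mp hev
    refine ⟨N₀, ?_⟩
    intro n hn
    obtain ⟨m, hm, hPm⟩ := hA x hx (n - 1)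
    have hmn : n ≤ m := by omega
    have aux : ∀ d j, N₀ ≤ j → x ∈ P (j + d) → x ∈ P j := by
      intro d
      induction d with
      | zero => intro j _ h; simpa using h
      | succ d ih =>
        intro j hj h
        rw [show j + (d + 1) = (j + 1) + d from by ring] at h
        have h1 : x ∈ P (j + 1) := ih (j + 1) (by omega) h
        have h2 : x ∉ B j := hN₀ j hj
        by_contra h3
        exact h2 ⟨h1, h3⟩
    exact aux (m - n) n (by omega) (by rw [show n + (m - n) = m from by omega]; exact hPm)
  have hG1 : ν G = 1 := by
    have hsub2 : Sset W ⊆ G ∪ {x | ¬ ∀ᶠ n in Filter.atTop, x ∉ B n} := by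
      intro x hx
      by_cases h : ∀ᶠ n in Filter.atTop, x ∉ B n
      · exact Or.inl (hSG x hx h)
      · exact Or.inr h
    have hnull : ν {x | ¬ ∀ᶠ n in Filter.atTop, x ∉ B n} = 0 := by
      have : {x | ¬ ∀ᶠ n in Filter.atTop, x ∉ B n} = {x | ∃ᶠ n in Filter.atTop, x ∈ B n} := by
        ext x
        simp [Filter.not_eventually, Filter.frequently_atTop]
      rw [this]
      exact hBC
    have h1 : (1 : ℝ≥0∞) ≤ ν G := by
      calc (1 : ℝ≥0∞) = ν (Sset W) := hS.symm
        _ ≤ ν (G ∪ {x | ¬ ∀ᶠ n in Filter.atTop, x ∉ B n}) := measure_mono hsub2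
        _ ≤ ν G + ν {x | ¬ ∀ᶠ n in Filter.atTop, x ∉ B n} := measure_union_le _ _
        _ = ν G := by rw [hnull, add_zero]
    exact le_antisymm prob_le_one h1
  have hGc : ν Gᶜ = 0 := by
    rw [measure_compl hGmeas (measure_ne_top ν G), hG1, measure_univ, tsub_self]
  rw [MeasureTheory.ae_iff]
  exact hGc

end Stmt13
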